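/- Define δ_q(u) = α + β − 2αβ + ((λ₊ − λ₋)/(2 + λ₊ + λ₋))·(α − β), where α = (λ₊^q−1)/(λ₊−1), β = (λ₋^q−1)/(λ₋−1), and λ±(u) are the roots of X² − (u²+2)X + 1. Then δ_q(u) ∈ ℤ[u], and deg δ_q(u) = 2q − 4 for every integer q > 1. -/
import Mathlib


open Polynomial

/-- `λ₊(u) = ((u²+2) + r)/2` where `r` is a square root of `u⁴+4u²`. -/
noncomputable def lamp (u r : ℂ) : ℂ := (u ^ 2 + 2 + r) / 2

/-- `λ₋(u) = ((u²+2) - r)/2` where `r` is a square root of `u⁴+4u²`. -/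
noncomputable def lamm (u r : ℂ) : ℂ := (u ^ 2 + 2 - r) / 2

/-- `D` is the polynomial `δ_q`, the middle coefficient of the twisted
Alexander polynomial, characterized by its value
`α + β - 2αβ + ((λ₊-λ₋)/(2+λ₊+λ₋))(α-β)` with `α = (λ₊^q-1)/(λ₊-1)`,
`β = (λ₋^q-1)/(λ₋-1)`. -/
def DeltaRel (q : ℤ) (D : Polynomial ℤ) : Prop :=
  ∀ u r : ℂ, r ^ 2 = u ^ 4 + 4 * u ^ 2 →
    lamp u r ≠ 1 → lamm u r ≠ 1 → 2 + lamp u r + lamm u r ≠ 0 →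
    (Polynomial.aeval u D : ℂ) =
      ((lamp u r) ^ q - 1) / (lamp u r - 1) + ((lamm u r) ^ q - 1) / (lamm u r - 1)
        - 2 * (((lamp u r) ^ q - 1) / (lamp u r - 1)) * (((lamm u r) ^ q - 1) / (lamm u r - 1))
        + ((lamp u r - lamm u r) / (2 + lamp u r + lamm u r)) *
            (((lamp u r) ^ q - 1) / (lamp u r - 1) - ((lamm u r) ^ q - 1) / (lamm u r - 1))

open Finset

noncomputable def Tc : ℕ → Polynomial ℤ
  | 0 => 2
  | 1 => X
  | (n+2) => X * Tc (n+1) - Tc n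

noncomputable def Uc : ℕ → Polynomial ℤ
  | 0 => 1
  | 1 => X
  | (n+2) => X * Uc (n+1) - Uc n

lemma Tc_two (n : ℕ) : Tc (n+2) = X * Tc (n+1) - Tc n := rfl
lemma Uc_two (n : ℕ) : Uc (n+2) = X * Uc (n+1) - Uc n := rfl

lemma Tc_natDegree_le : ∀ n, (Tc n).natDegree ≤ n
  | 0 => by simp [Tc]
  | 1 => by simp [Tc]
  | (n+2) => by
      have h1 := Tc_natDegree_le (n+1)
      have h2 := Tc_natDegree_le n
      rw [Tc_two]
      refine le_trans (natDegree_sub_le _ _) ?_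
      have h3 := natDegree_mul_le (p := (X : Polynomial ℤ)) (q := Tc (n+1))
      rw [natDegree_X] at h3
      simp only [max_le_iff]
      omega

lemma Uc_natDegree_le : ∀ n, (Uc n).natDegree ≤ n
  | 0 => by simp [Uc]
  | 1 => by simp [Uc]
  | (n+2) => by
      have h1 := Uc_natDegree_le (n+1)
      have h2 := Uc_natDegree_le n
      rw [Uc_two]
      refine le_trans (natDegree_sub_le _ _) ?_
      have h3 := natDegree_mul_le (p := (X : Polynomial ℤ)) (q := Uc (n+1))
      rw [natDegree_X] at h3
      simp only [max_le_iff]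
      omega

lemma Tc_coeff_zero (n k : ℕ) (h : n < k) : (Tc n).coeff k = 0 :=
  coeff_eq_zero_of_natDegree_lt (lt_of_le_of_lt (Tc_natDegree_le n) h)

lemma Uc_coeff_zero (n k : ℕ) (h : n < k) : (Uc n).coeff k = 0 :=
  coeff_eq_zero_of_natDegree_lt (lt_of_le_of_lt (Uc_natDegree_le n) h)

lemma Tc_coeff_self : ∀ n, (Tc (n+1)).coeff (n+1) = 1
  | 0 => by simp [Tc]
  | (n+1) => by
      have e : Tc (n+1+1) = X * Tc (n+1) - Tc n := Tc_two n
      rw [e, coeff_sub, coeff_X_mul, Tc_coeff_self n, Tc_coeff_zero n (n+2) (by omega)]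
      ring

lemma Uc_coeff_self : ∀ n, (Uc n).coeff n = 1
  | 0 => by simp [Uc]
  | 1 => by simp [Uc]
  | (n+2) => by
      rw [Uc_two, coeff_sub, coeff_X_mul, Uc_coeff_self (n+1), Uc_coeff_zero n (n+2) (by omega)]
      ring

lemma Tc_coeff_succ : ∀ n, (Tc (n+1)).coeff n = 0
  | 0 => by simp [Tc]
  | 1 => by
      have e : Tc 2 = X * X - 2 := Tc_two 0
      rw [e, coeff_sub, coeff_X_mul]
      simp [Tc]
  | (n+2) => by
      have e : Tc (n+2+1) = X * Tc (n+2) - Tc (n+1) := Tc_two (n+1)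
      rw [e, coeff_sub, coeff_X_mul, Tc_coeff_succ (n+1), Tc_coeff_zero (n+1) (n+2) (by omega)]
      ring

lemma Uc_coeff_succ : ∀ n, (Uc (n+1)).coeff n = 0
  | 0 => by simp [Uc]
  | 1 => by
      have e : Uc 2 = X * X - 1 := Uc_two 0
      rw [e, coeff_sub, coeff_X_mul]
      simp [Uc, Polynomial.coeff_one]
  | (n+2) => by
      have e : Uc (n+2+1) = X * Uc (n+2) - Uc (n+1) := Uc_two (n+1)
      rw [e, coeff_sub, coeff_X_mul, Uc_coeff_succ (n+1), Uc_coeff_zero (n+1) (n+2) (by omega)]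
      ring

lemma Tc_coeff_sub2 : ∀ n, (Tc (n+2)).coeff n = -((n : ℤ)+2)
  | 0 => by
      have e : Tc 2 = X * X - 2 := Tc_two 0
      rw [e, coeff_sub, mul_coeff_zero]
      simp
  | 1 => by
      have e : Tc 3 = X * Tc 2 - X := Tc_two 1
      have e2 : Tc 2 = X * X - 2 := Tc_two 0
      rw [e, coeff_sub, coeff_X_mul, e2, coeff_sub, mul_coeff_zero]
      simp
  | (n+2) => by
      have e : Tc (n+2+2) = X * Tc (n+3) - Tc (n+2) := Tc_two (n+2)
      rw [e, coeff_sub, coeff_X_mul]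
      have h1 : (Tc (n+3)).coeff (n+1) = -((n:ℤ)+1+2) := Tc_coeff_sub2 (n+1)
      have h2 : (Tc (n+2)).coeff (n+2) = 1 := Tc_coeff_self (n+1)
      rw [h1, h2]
      push_cast
      ring

lemma Uc_coeff_sub2 : ∀ n, (Uc (n+2)).coeff n = -((n : ℤ)+1)
  | 0 => by
      have e : Uc 2 = X * X - 1 := Uc_two 0
      rw [e, coeff_sub, mul_coeff_zero]
      simp
  | 1 => by
      have e : Uc 3 = X * Uc 2 - X := Uc_two 1
      have e2 : Uc 2 = X * X - 1 := Uc_two 0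
      rw [e, coeff_sub, coeff_X_mul, e2, coeff_sub, mul_coeff_zero]
      simp
  | (n+2) => by
      have e : Uc (n+2+2) = X * Uc (n+3) - Uc (n+2) := Uc_two (n+2)
      rw [e, coeff_sub, coeff_X_mul]
      have h1 : (Uc (n+3)).coeff (n+1) = -((n:ℤ)+1+1) := Uc_coeff_sub2 (n+1)
      have h2 : (Uc (n+2)).coeff (n+2) = 1 := Uc_coeff_self (n+2)
      rw [h1, h2]
      push_cast
      ring

lemma evalT (a b : ℂ) (hab : a * b = 1) : ∀ j, (aeval (a+b) (Tc j) : ℂ) = a^j + b^j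
  | 0 => by norm_num [Tc, map_ofNat]
  | 1 => by simp [Tc]
  | (n+2) => by
      rw [Tc_two]
      simp only [map_sub, map_mul, aeval_X, evalT a b hab (n+1), evalT a b hab n]
      linear_combination (a^n + b^n) * hab

lemma evalU (a b : ℂ) (hab : a * b = 1) :
    ∀ j, (a - b) * (aeval (a+b) (Uc j) : ℂ) = a^(j+1) - b^(j+1)
  | 0 => by simp [Uc]
  | 1 => by simp [Uc]; ring
  | (n+2) => by
      rw [Uc_two]
      simp only [map_sub, map_mul, aeval_X]
      have h1 := evalU a b hab (n+1)
      have h2 := evalU a b hab n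
      linear_combination (a+b) * h1 - h2 + (a^(n+1) - b^(n+1)) * hab

lemma prodAB (a b : ℂ) (hab : a * b = 1) (n : ℕ) :
    (∑ j ∈ range n, a ^ j) * (∑ k ∈ range n, b ^ k)
      = -(n : ℂ) + ∑ m ∈ range n, ((n : ℂ) - m) * (a ^ m + b ^ m) := by
  induction n with
  | zero => simp
  | succ n ih =>
    have hcross : ∀ x y : ℂ, x * y = 1 →
        x ^ n * ∑ k ∈ range n, y ^ k = ∑ k ∈ range n, x ^ (k+1) := by
      intro x y hxy
      rw [mul_sum, ← sum_range_reflect (fun k => x ^ (k+1)) n]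
      refine sum_congr rfl fun k hk => ?_
      have hk' : k < n := mem_range.mp hk
      have h : x ^ n * y ^ k = x ^ (n - k) * (x*y) ^ k := by
        rw [mul_pow, ← mul_assoc, ← pow_add]
        congr 2
        omega
      rw [h, hxy, one_pow, mul_one]
      congr 1
      omega
    have hR : ∑ m ∈ range (n+1), ((n+1 : ℂ) - m) * (a ^ m + b ^ m)
        = (∑ m ∈ range n, ((n : ℂ) - m) * (a ^ m + b ^ m))
          + (∑ m ∈ range n, (a ^ (m+1) + b ^ (m+1))) + 2 := by
      have h1 : ∀ m : ℕ, ((n+1 : ℂ) - m) * (a ^ m + b ^ m)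
          = ((n:ℂ) - m) * (a ^ m + b ^ m) + (a ^ m + b ^ m) := by
        intro m; push_cast; ring
      rw [sum_congr rfl (fun m _ => h1 m), sum_add_distrib,
          sum_range_succ (fun m => ((n:ℂ) - m) * (a ^ m + b ^ m)),
          sum_range_succ' (fun m => a ^ m + b ^ m)]
      simp
      ring
    rw [sum_range_succ, sum_range_succ (fun k => b ^ k)]
    have hc1 := hcross a b hab
    have hc2 := hcross b a (by linear_combination hab)
    have hs : ∑ m ∈ range n, (a ^ (m+1) + b ^ (m+1))
        = (∑ k ∈ range n, a ^ (k+1)) + ∑ k ∈ range n, b ^ (k+1) := sum_add_distrib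
    have hpn : a^n * b^n = 1 := by rw [← mul_pow, hab, one_pow]
    push_cast
    linear_combination ih + hc1 + hc2 + hpn - hs - hR

noncomputable def Dhat (n : ℕ) : Polynomial ℤ :=
  (∑ j ∈ range n, Tc j) + C (2 * (n : ℤ)) - 2 * ∑ m ∈ range n, C ((n : ℤ) - m) * Tc m
    + (X - 2) * ∑ j ∈ range (n - 1), Uc j

lemma sumT_coeff (n k : ℕ) (hk : 1 ≤ k) (hn : n ≤ k + 2) :
    (∑ j ∈ range n, Tc j).coeff k = if k < n then 1 else 0 := by
  rw [finset_sum_coeff]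
  by_cases h : k < n
  · rw [if_pos h]
    rw [Finset.sum_eq_single k]
    · obtain ⟨k', rfl⟩ : ∃ k', k = k' + 1 := ⟨k - 1, by omega⟩
      exact Tc_coeff_self k'
    · intro b hb hbk
      have hb' : b < n := mem_range.mp hb
      rcases lt_trichotomy b k with h' | h' | h'
      · exact Tc_coeff_zero b k h'
      · exact absurd h' hbk
      · have : b = k + 1 := by omega
        subst this
        exact Tc_coeff_succ k
    · intro h'
      exact absurd (mem_range.mpr h) h'
  · rw [if_neg h]
    refine Finset.sum_eq_zero fun b hb => ?_
    have hb' : b < n := mem_range.mp hb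
    rcases Nat.lt_or_ge b k with h' | h'
    · exact Tc_coeff_zero b k h'
    · have : b = k + 1 := by omega
      subst this
      exact Tc_coeff_succ k

lemma sumT_coeff' (n k : ℕ) (hk : 1 ≤ k) (hn : n ≤ k + 2) :
    (∑ m ∈ range n, C ((n : ℤ) - m) * Tc m).coeff k
      = if k < n then (n : ℤ) - k else 0 := by
  have hcoeff : ∀ m : ℕ, (C ((n : ℤ) - m) * Tc m).coeff k = ((n : ℤ) - m) * (Tc m).coeff k :=
    fun m => coeff_C_mul _
  rw [finset_sum_coeff]
  by_cases h : k < n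
  · rw [if_pos h]
    rw [Finset.sum_eq_single k]
    · obtain ⟨k', rfl⟩ : ∃ k', k = k' + 1 := ⟨k - 1, by omega⟩
      rw [hcoeff, Tc_coeff_self k', mul_one]
    · intro b hb hbk
      have hb' : b < n := mem_range.mp hb
      rw [hcoeff]
      rcases Nat.lt_or_ge b k with h' | h'
      · rw [Tc_coeff_zero b k h', mul_zero]
      · have : b = k + 1 := by omega
        subst this
        rw [Tc_coeff_succ k, mul_zero]
    · intro h'
      exact absurd (mem_range.mpr h) h'
  · rw [if_neg h]
    refine Finset.sum_eq_zero fun b hb => ?_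
    have hb' : b < n := mem_range.mp hb
    rw [hcoeff]
    rcases Nat.lt_or_ge b k with h' | h'
    · rw [Tc_coeff_zero b k h', mul_zero]
    · have : b = k + 1 := by omega
      subst this
      rw [Tc_coeff_succ k, mul_zero]

lemma sumU_coeff (n k : ℕ) (hn : n ≤ k + 2) :
    (∑ j ∈ range n, Uc j).coeff k = if k < n then 1 else 0 := by
  rw [finset_sum_coeff]
  by_cases h : k < n
  · rw [if_pos h]
    rw [Finset.sum_eq_single k]
    · exact Uc_coeff_self k
    · intro b hb hbk
      have hb' : b < n := mem_range.mp hb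
      rcases Nat.lt_or_ge b k with h' | h'
      · exact Uc_coeff_zero b k h'
      · have : b = k + 1 := by omega
        subst this
        exact Uc_coeff_succ k
    · intro h'
      exact absurd (mem_range.mpr h) h'
  · rw [if_neg h]
    refine Finset.sum_eq_zero fun b hb => ?_
    have hb' : b < n := mem_range.mp hb
    rcases Nat.lt_or_ge b k with h' | h'
    · exact Uc_coeff_zero b k h'
    · have : b = k + 1 := by omega
      subst this
      exact Uc_coeff_succ k

lemma XsubC_mul_coeff (p : Polynomial ℤ) (k : ℕ) :
    ((X - 2) * p).coeff (k + 1) = p.coeff k - 2 * p.coeff (k + 1) := by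
  rw [sub_mul, coeff_sub, coeff_X_mul]
  congr 1
  have : (2 : Polynomial ℤ) = C 2 := by norm_num
  rw [this, coeff_C_mul]

lemma Dhat_coeff (n k : ℕ) (hn : n ≤ k + 3) :
    (Dhat n).coeff (k+1) =
      (if k+1 < n then 1 else 0) - 2 * (if k+1 < n then (n:ℤ) - (k+1) else 0)
        + ((if k < n - 1 then 1 else 0) - 2 * (if k+1 < n - 1 then 1 else 0)) := by
  have h2 : (2 : Polynomial ℤ) = C 2 := by norm_num
  rw [Dhat, coeff_add, coeff_sub, coeff_add, XsubC_mul_coeff,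
      sumT_coeff n (k+1) (by omega) (by omega),
      h2, coeff_C_mul,
      sumT_coeff' n (k+1) (by omega) (by omega),
      sumU_coeff (n-1) k (by omega),
      sumU_coeff (n-1) (k+1) (by omega),
      coeff_C, if_neg (Nat.succ_ne_zero k)]
  push_cast
  ring

lemma Dhat_coeff_zero (N k : ℕ) (hk : N + 1 ≤ k) : (Dhat (N+2)).coeff k = 0 := by
  obtain ⟨k', rfl⟩ : ∃ k', k = k' + 1 := ⟨k - 1, by omega⟩
  rw [Dhat_coeff (N+2) k' (by omega)]
  have e : N + 2 - 1 = N + 1 := rfl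
  rw [e]
  by_cases h : k' = N
  · subst h
    rw [if_pos (by omega), if_pos (by omega), if_pos (by omega), if_neg (by omega)]
    push_cast
    ring
  · rw [if_neg (by omega), if_neg (by omega), if_neg (by omega), if_neg (by omega)]
    ring

lemma Dhat_coeff_neg4 (N : ℕ) : (Dhat (N+3)).coeff (N+1) = -4 := by
  rw [Dhat_coeff (N+3) N (by omega)]
  have e : N + 3 - 1 = N + 2 := rfl
  rw [e, if_pos (by omega), if_pos (by omega), if_pos (by omega), if_pos (by omega)]
  push_cast
  ring

lemma Dhat_two : Dhat 2 = C (-4) := by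
  simp [Dhat, Tc, Uc, sum_range_succ, sum_range_zero]
  ring_nf

lemma Dhat_natDegree (N : ℕ) : (Dhat (N+2)).natDegree = N := by
  cases N with
  | zero => rw [Dhat_two]; simp
  | succ N =>
      refine natDegree_eq_of_le_of_coeff_ne_zero ?_ ?_
      · rw [natDegree_le_iff_coeff_eq_zero]
        intro m hm
        exact Dhat_coeff_zero (N+1) m (by omega)
      · rw [show N + 1 + 2 = N + 3 from rfl, Dhat_coeff_neg4 N]
        norm_num

lemma Dhat_eval (a b : ℂ) (hab : a * b = 1) (N : ℕ) :
    (aeval (a+b) (Dhat (N+2)) : ℂ)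
      = (∑ j ∈ range (N+2), a ^ j) + (∑ j ∈ range (N+2), b ^ j)
        - 2 * ((∑ j ∈ range (N+2), a ^ j) * (∑ k ∈ range (N+2), b ^ k))
        + (a + b - 2) * ∑ j ∈ range (N+1), (aeval (a+b) (Uc j) : ℂ) := by
  have e : N + 2 - 1 = N + 1 := rfl
  rw [Dhat, e]
  simp only [map_add, map_sub, map_mul, map_sum, aeval_C, aeval_X, map_ofNat,
    algebraMap_int_eq, map_natCast, map_intCast]
  have hT : (∑ j ∈ range (N+2), (aeval (a+b) (Tc j) : ℂ))
      = (∑ j ∈ range (N+2), a ^ j) + (∑ j ∈ range (N+2), b ^ j) := by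
    rw [← sum_add_distrib]
    exact sum_congr rfl fun j _ => evalT a b hab j
  have hT2 : (∑ m ∈ range (N+2), ((((N+2 : ℕ) : ℂ)) - (m : ℂ)) * (aeval (a+b) (Tc m) : ℂ))
      = ∑ m ∈ range (N+2), (((N+2 : ℕ) : ℂ) - m) * (a ^ m + b ^ m) := by
    refine sum_congr rfl fun m _ => ?_
    rw [evalT a b hab m]
  rw [hT, hT2]
  have hprod := prodAB a b hab (N+2)
  push_cast at hprod ⊢
  linear_combination (2 : ℂ) * hprod

/-- δ_q is an integer polynomial in u of degree 2q - 4 for every integer q > 1. -/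
theorem stmt_16 (q : ℤ) (hq : 1 < q) :
    ∃ D : Polynomial ℤ, DeltaRel q D ∧ D.natDegree = 2 * q.toNat - 4 := by
  obtain ⟨N, hN⟩ : ∃ N, q.toNat = N + 2 := ⟨q.toNat - 2, by omega⟩
  refine ⟨(Dhat (N+2)).comp (X^2 + C 2), ?_, ?_⟩
  · intro u r hr h1 h2 h3
    set a := lamp u r with ha
    set b := lamm u r with hb
    have hab : a * b = 1 := by
      rw [ha, hb, lamp, lamm]
      field_simp
      linear_combination -hr
    have hsum : a + b = u^2 + 2 := by rw [ha, hb, lamp, lamm]; ring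
    have hdiff : a - b = r := by rw [ha, hb, lamp, lamm]; ring
    have hq' : q = ((N + 2 : ℕ) : ℤ) := by omega
    rw [hq', zpow_natCast, zpow_natCast,
        ← geom_sum_eq h1 (N+2), ← geom_sum_eq h2 (N+2), aeval_comp]
    have hx : (aeval u ((X : Polynomial ℤ)^2 + C 2) : ℂ) = a + b := by
      rw [hsum]; simp [map_ofNat]
    rw [hx, Dhat_eval a b hab N]
    have hW : (∑ j ∈ range (N+2), a ^ j) - (∑ j ∈ range (N+2), b ^ j)
        = (a - b) * ∑ j ∈ range (N+1), (aeval (a+b) (Uc j) : ℂ) := by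
      rw [mul_sum, sum_range_succ' (fun j => a ^ j) (N+1),
          sum_range_succ' (fun j => b ^ j) (N+1)]
      have : ∀ j ∈ range (N+1), (a - b) * (aeval (a+b) (Uc j) : ℂ) = a^(j+1) - b^(j+1) :=
        fun j _ => evalU a b hab j
      rw [sum_congr rfl this, sum_sub_distrib]
      ring
    have key : (a + b - 2) * (∑ j ∈ range (N+1), (aeval (a+b) (Uc j) : ℂ))
        = ((a - b) / (2 + a + b)) *
            ((∑ j ∈ range (N+2), a ^ j) - (∑ j ∈ range (N+2), b ^ j)) := by
      rw [hW, div_mul_eq_mul_div, eq_div_iff h3]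
      set W := ∑ j ∈ range (N+1), (aeval (a+b) (Uc j) : ℂ) with hWdef
      linear_combination (W*(a+b+u^2+2))*hsum - (W*(a-b+r))*hdiff - W*hr
    rw [key]
    ring
  · rw [natDegree_comp, Dhat_natDegree]
    have h2 : ((X : Polynomial ℤ)^2 + C 2).natDegree = 2 := by
      compute_degree!
    rw [h2, hN]
    omega
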